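/- Let k ≥ 2 be an integer and let H = (V, E_k) be a k-uniform hypergraph with N vertices whose average degree t^{k−1} := k·|E_k|/N satisfies t ≥ 1. Then α(H) ≥ ((k−1)/k)·(N/t). -/

import Mathlib

/-- The independence number of a hypergraph with edge set `E` on vertex type `V`:
the maximum size of a set `I` of vertices containing no edge. -/
noncomputable def indepNum {V : Type*} [DecidableEq V] (E : Finset (Finset V)) : ℕ :=
  sSup {m | ∃ I : Finset V, (∀ e ∈ E, ¬ e ⊆ I) ∧ I.card = m}

theorem sum_pq' (V : Type*) [DecidableEq V] (u : Finset V) (p q : ℝ) :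
    ∑ S ∈ u.powerset, p ^ S.card * q ^ (u.card - S.card) = (p + q) ^ u.card := by
  calc ∑ S ∈ u.powerset, p ^ S.card * q ^ (u.card - S.card)
      = ∑ S ∈ u.powerset, (∏ _i ∈ S, p) * ∏ _i ∈ u \ S, q := by
        refine Finset.sum_congr rfl fun S hS => ?_
        rw [Finset.prod_const, Finset.prod_const, Finset.card_sdiff_of_subset (Finset.mem_powerset.mp hS)]
    _ = ∏ _i ∈ u, (p + q) := (Finset.prod_add _ _ _).symm
    _ = (p + q) ^ u.card := Finset.prod_const _

theorem sum_pq_filter' (V : Type*) [DecidableEq V] (u A : Finset V) (hA : A ⊆ u) (p q : ℝ) :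
    ∑ S ∈ u.powerset.filter (fun S => A ⊆ S), p ^ S.card * q ^ (u.card - S.card)
      = p ^ A.card * (p + q) ^ (u \ A).card := by
  rw [← sum_pq' V (u \ A) p q, Finset.mul_sum]
  refine Finset.sum_nbij' (fun S => S \ A) (fun T => T ∪ A) ?_ ?_ ?_ ?_ ?_
  · intro S hS
    simp only [Finset.mem_filter, Finset.mem_powerset] at hS ⊢
    exact Finset.sdiff_subset_sdiff hS.1 (le_refl A)
  · intro T hT
    simp only [Finset.mem_filter, Finset.mem_powerset, Finset.mem_powerset] at hT ⊢
    constructor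
    · exact Finset.union_subset (hT.trans Finset.sdiff_subset) hA
    · exact Finset.subset_union_right
  · intro S hS
    simp only [Finset.mem_filter, Finset.mem_powerset] at hS
    show S \ A ∪ A = S
    exact Finset.sdiff_union_of_subset hS.2
  · intro T hT
    simp only [Finset.mem_powerset] at hT
    show (T ∪ A) \ A = T
    rw [Finset.union_sdiff_right]
    exact Finset.sdiff_eq_self_of_disjoint (Finset.disjoint_of_subset_left hT Finset.sdiff_disjoint)
  · intro S hS
    simp only [Finset.mem_filter, Finset.mem_powerset] at hS
    obtain ⟨hSu, hAS⟩ := hS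
    have h1 : (S \ A).card = S.card - A.card := Finset.card_sdiff_of_subset hAS
    have h2 : (u \ A).card = u.card - A.card := Finset.card_sdiff_of_subset hA
    have h3 : A.card ≤ S.card := Finset.card_le_card hAS
    have h4 : S.card ≤ u.card := Finset.card_le_card hSu
    show p ^ S.card * q ^ (u.card - S.card) = p ^ A.card * (p ^ (S \ A).card * q ^ ((u \ A).card - (S \ A).card))
    rw [← mul_assoc, ← pow_add, h1, h2]
    congr 2
    · omega
    · omega

theorem indep_ge' {N k : ℕ} (hk : 2 ≤ k) (hN : 0 < N) (E : Finset (Finset (Fin N)))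
    (hunif : ∀ e ∈ E, e.card = k) (S : Finset (Fin N)) :
    (S.card : ℝ) - ((E.filter (fun e => e ⊆ S)).card : ℝ) ≤ (indepNum E : ℝ) := by
  classical
  set f : Finset (Fin N) → Fin N := fun e => if h : e.Nonempty then e.min' h else ⟨0, hN⟩ with hf
  set B := E.filter (fun e => e ⊆ S) with hB
  set D := B.image f with hD
  set I := S \ D with hI
  have hne : ∀ e ∈ E, e.Nonempty := by
    intro e he
    rw [← Finset.card_pos, hunif e he]; omega
  have hindep : ∀ e ∈ E, ¬ e ⊆ I := by
    intro e he hsub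
    have heS : e ⊆ S := hsub.trans Finset.sdiff_subset
    have heB : e ∈ B := Finset.mem_filter.mpr ⟨he, heS⟩
    have hfe : f e ∈ e := by
      rw [hf]; simp only [dif_pos (hne e he)]; exact Finset.min'_mem e (hne e he)
    have hfD : f e ∈ D := Finset.mem_image_of_mem f heB
    have := hsub hfe
    rw [hI, Finset.mem_sdiff] at this
    exact this.2 hfD
  have hmem : I.card ∈ {m | ∃ I : Finset (Fin N), (∀ e ∈ E, ¬ e ⊆ I) ∧ I.card = m} :=
    ⟨I, hindep, rfl⟩
  have hbdd : BddAbove {m | ∃ I : Finset (Fin N), (∀ e ∈ E, ¬ e ⊆ I) ∧ I.card = m} := by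
    refine ⟨N, fun m hm => ?_⟩
    obtain ⟨J, _, hJ⟩ := hm
    calc m = J.card := hJ.symm
      _ ≤ Fintype.card (Fin N) := Finset.card_le_univ J
      _ = N := Fintype.card_fin N
  have hle : I.card ≤ indepNum E := le_csSup hbdd hmem
  have h1 : S.card ≤ I.card + D.card := Finset.card_le_card_sdiff_add_card
  have h2 : D.card ≤ B.card := Finset.card_image_le
  have h0 : (I.card : ℝ) ≤ (indepNum E : ℝ) := by exact_mod_cast hle
  have h1' : (S.card : ℝ) ≤ (I.card : ℝ) + D.card := by exact_mod_cast h1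
  have h2' : (D.card : ℝ) ≤ (B.card : ℝ) := by exact_mod_cast h2
  linarith

/-- Turán/Spencer bound: a `k`-uniform hypergraph on `N` vertices with average degree
`t^{k-1} = k|E_k|/N`, `t ≥ 1`, has independence number at least `((k-1)/k)·(N/t)`. -/
theorem stmt0 (k N : ℕ) (hk : 2 ≤ k) (hN : 0 < N)
    (E : Finset (Finset (Fin N))) (hunif : ∀ e ∈ E, e.card = k)
    (t : ℝ) (ht : 1 ≤ t)
    (havg : t ^ (k - 1) = (k : ℝ) * E.card / N) :
    ((k : ℝ) - 1) / k * ((N : ℝ) / t) ≤ (indepNum E : ℝ) := by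
  classical
  have ht0 : (0 : ℝ) < t := lt_of_lt_of_le one_pos ht
  set p : ℝ := 1 / t with hp
  have hp0 : 0 ≤ p := by positivity
  have hp1 : p ≤ 1 := by rw [hp]; rw [div_le_one ht0]; exact ht
  set q : ℝ := 1 - p with hq
  have hq0 : 0 ≤ q := by rw [hq]; linarith
  have hpq : p + q = 1 := by rw [hq]; ring
  set u : Finset (Fin N) := Finset.univ with hu
  have hucard : u.card = N := by simp [hu]
  set w : Finset (Fin N) → ℝ := fun S => p ^ S.card * q ^ (u.card - S.card) with hw
  have hw0 : ∀ S, 0 ≤ w S := fun S => by positivity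
  have hsum1 : ∑ S ∈ u.powerset, w S = 1 := by
    rw [hw]; rw [sum_pq' _ u p q, hpq, one_pow]
  have hmarg : ∀ A : Finset (Fin N),
      ∑ S ∈ u.powerset.filter (fun S => A ⊆ S), w S = p ^ A.card := by
    intro A
    rw [hw, sum_pq_filter' _ u A (Finset.subset_univ A), hpq, one_pow, mul_one]
  -- expected size
  have E1 : ∑ S ∈ u.powerset, w S * (S.card : ℝ) = p * N := by
    have hcard : ∀ S : Finset (Fin N), (S.card : ℝ) = ∑ v ∈ u, (if v ∈ S then (1:ℝ) else 0) := by
      intro S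
      rw [Finset.sum_ite_mem, Finset.univ_inter, Finset.sum_const, nsmul_eq_mul, mul_one]
    calc ∑ S ∈ u.powerset, w S * (S.card : ℝ)
        = ∑ S ∈ u.powerset, ∑ v ∈ u, w S * (if v ∈ S then (1:ℝ) else 0) := by
          refine Finset.sum_congr rfl fun S _ => ?_
          rw [hcard S, Finset.mul_sum]
      _ = ∑ v ∈ u, ∑ S ∈ u.powerset, w S * (if v ∈ S then (1:ℝ) else 0) := Finset.sum_comm
      _ = ∑ v ∈ u, p := by
          refine Finset.sum_congr rfl fun v _ => ?_
          have heq : ∀ S : Finset (Fin N), w S * (if v ∈ S then (1:ℝ) else 0)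
              = if ({v} : Finset (Fin N)) ⊆ S then w S else 0 := by
            intro S
            by_cases h : v ∈ S <;> simp [h, Finset.singleton_subset_iff]
          simp_rw [heq]
          rw [← Finset.sum_filter, hmarg {v}, Finset.card_singleton, pow_one]
      _ = p * N := by rw [Finset.sum_const, hucard, nsmul_eq_mul]; ring
  -- expected number of contained edges
  have E2 : ∑ S ∈ u.powerset, w S * ((E.filter (fun e => e ⊆ S)).card : ℝ)
      = (E.card : ℝ) * p ^ k := by
    have hcard : ∀ S : Finset (Fin N), ((E.filter (fun e => e ⊆ S)).card : ℝ)
        = ∑ e ∈ E, (if e ⊆ S then (1:ℝ) else 0) := by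
      intro S
      rw [Finset.card_filter]
      push_cast
      rfl
    calc ∑ S ∈ u.powerset, w S * ((E.filter (fun e => e ⊆ S)).card : ℝ)
        = ∑ S ∈ u.powerset, ∑ e ∈ E, w S * (if e ⊆ S then (1:ℝ) else 0) := by
          refine Finset.sum_congr rfl fun S _ => ?_
          rw [hcard S, Finset.mul_sum]
      _ = ∑ e ∈ E, ∑ S ∈ u.powerset, w S * (if e ⊆ S then (1:ℝ) else 0) := Finset.sum_comm
      _ = ∑ e ∈ E, p ^ k := by
          refine Finset.sum_congr rfl fun e he => ?_
          have heq : ∀ S : Finset (Fin N), w S * (if e ⊆ S then (1:ℝ) else 0)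
              = if e ⊆ S then w S else 0 := by
            intro S
            by_cases h : e ⊆ S <;> simp [h]
          simp_rw [heq]
          rw [← Finset.sum_filter, hmarg e, hunif e he]
      _ = (E.card : ℝ) * p ^ k := by rw [Finset.sum_const, nsmul_eq_mul]
  -- key inequality
  have key : p * N - (E.card : ℝ) * p ^ k ≤ (indepNum E : ℝ) := by
    calc p * N - (E.card : ℝ) * p ^ k
        = ∑ S ∈ u.powerset, w S * ((S.card : ℝ) - ((E.filter (fun e => e ⊆ S)).card : ℝ)) := by
          simp_rw [mul_sub]
          rw [Finset.sum_sub_distrib, E1, E2]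
      _ ≤ ∑ S ∈ u.powerset, w S * (indepNum E : ℝ) := by
          refine Finset.sum_le_sum fun S _ => ?_
          exact mul_le_mul_of_nonneg_left (indep_ge' hk hN E hunif S) (hw0 S)
      _ = (indepNum E : ℝ) := by rw [← Finset.sum_mul, hsum1, one_mul]
  -- arithmetic
  have hk0 : (0 : ℝ) < k := by positivity
  have hN0 : (0 : ℝ) < N := by exact_mod_cast hN
  have hEcard : (E.card : ℝ) = (N : ℝ) * t ^ (k - 1) / k := by
    field_simp at havg
    field_simp
    linarith [havg]
  have htk : t ^ k = t ^ (k - 1) * t := by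
    rw [← pow_succ]
    congr 1
    omega
  have harith : p * N - (E.card : ℝ) * p ^ k = ((k : ℝ) - 1) / k * ((N : ℝ) / t) := by
    rw [hEcard, hp]
    have htk0 : t ^ k ≠ 0 := by positivity
    have htk10 : t ^ (k - 1) ≠ 0 := by positivity
    field_simp
    rw [mul_comm t, ← htk, one_div_pow, mul_one_div_cancel htk0]
  linarith
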